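/- Let P be a path graph with n+1 vertices. Then b_k(P) = (k−1)·C(n,k) for all k ≥ 1. -/

import Mathlib

open Finset

/-- Number of connected components of the induced subgraph on `W`, summed over all
`k`-subsets, each minus 1: the `k`-th special graded Betti number of a graph. -/
noncomputable def graphB {V : Type} [Fintype V] [DecidableEq V] (k : ℕ) (G : SimpleGraph V) : ℤ :=
  ∑ W ∈ Finset.powersetCard k (Finset.univ : Finset V),
    ((Nat.card (G.induce (W : Set V)).ConnectedComponent : ℤ) - 1)

/-- `c_k(G)`: total number of connected components over all `k`-subsets. -/
noncomputable def graphC {V : Type} [Fintype V] [DecidableEq V] (k : ℕ) (G : SimpleGraph V) : ℕ :=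
  ∑ W ∈ Finset.powersetCard k (Finset.univ : Finset V),
    Nat.card (G.induce (W : Set V)).ConnectedComponent

/-- `G` is a `t`-connected sum of `G₁` and `G₂`. -/
def IsConnSum {V₁ V₂ V : Type} (t : ℕ) (G₁ : SimpleGraph V₁) (G₂ : SimpleGraph V₂)
    (G : SimpleGraph V) : Prop :=
  ∃ (f₁ : V₁ ↪ V) (f₂ : V₂ ↪ V) (F₁ : Set V₁) (F₂ : Set V₂),
    Nat.card F₁ = t ∧ Nat.card F₂ = t ∧
    (∀ x ∈ F₁, ∀ y ∈ F₁, x ≠ y → G₁.Adj x y) ∧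
    (∀ x ∈ F₂, ∀ y ∈ F₂, x ≠ y → G₂.Adj x y) ∧
    Set.range f₁ ∪ Set.range f₂ = Set.univ ∧
    Set.range f₁ ∩ Set.range f₂ = f₁ '' F₁ ∧
    f₁ '' F₁ = f₂ '' F₂ ∧
    (∀ a b, G.Adj a b ↔
      ((∃ x y, G₁.Adj x y ∧ f₁ x = a ∧ f₁ y = b) ∨
       (∃ x y, G₂.Adj x y ∧ f₂ x = a ∧ f₂ y = b)))

/-- Iterated `t`-connected sums of a list of graphs. -/
inductive IsIterConnSum (t : ℕ) :
    List ((W : Type) × SimpleGraph W) → ((W : Type) × SimpleGraph W) → Prop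
  | single (p : (W : Type) × SimpleGraph W) : IsIterConnSum t [p] p
  | cons {l : List ((W : Type) × SimpleGraph W)} {p q r : (W : Type) × SimpleGraph W} :
      IsIterConnSum t l p → IsConnSum t p.2 q.2 r.2 → IsIterConnSum t (l ++ [q]) r

/-- An abstract simplicial complex on the finite vertex set `V`. -/
structure SimpComplex (V : Type) [DecidableEq V] where
  faces : Finset (Finset V)
  singleton_mem : ∀ v : V, {v} ∈ faces
  down_closed : ∀ F ∈ faces, ∀ F', F' ⊆ F → F' ∈ faces

/-- The 1-skeleton of a simplicial complex. -/
def SimpComplex.skeleton {V : Type} [DecidableEq V] (Δ : SimpComplex V) : SimpleGraph V where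
  Adj x y := x ≠ y ∧ ({x, y} : Finset V) ∈ Δ.faces
  symm := by
    constructor
    intro x y h
    exact ⟨h.1.symm, by rw [Finset.pair_comm]; exact h.2⟩
  loopless := by constructor; intro x h; exact h.1 rfl

/-- The graph of the restricted complex `Δ_W = {F ∩ W : F ∈ Δ}` on the vertex set `W`:
two vertices are connected iff they form a face of `Δ_W`. -/
def SimpComplex.restrictGraph {V : Type} [DecidableEq V] (Δ : SimpComplex V) (W : Finset V) :
    SimpleGraph (W : Set V) :=
  SimpleGraph.fromRel (fun x y => ∃ F ∈ Δ.faces, F ∩ W = {(x : V), (y : V)})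

/-- The `k`-th special graded Betti number of a simplicial complex. -/
noncomputable def complexB {V : Type} [Fintype V] [DecidableEq V] (k : ℕ)
    (Δ : SimpComplex V) : ℤ :=
  ∑ W ∈ Finset.powersetCard k (Finset.univ : Finset V),
    ((Nat.card (Δ.restrictGraph W).ConnectedComponent : ℤ) - 1)

/-- `Δ` is a `t`-connected sum of the simplicial complexes `Δ₁` and `Δ₂`. -/
def IsConnSumC {V₁ V₂ V : Type} [DecidableEq V₁] [DecidableEq V₂] [DecidableEq V] (t : ℕ)
    (Δ₁ : SimpComplex V₁) (Δ₂ : SimpComplex V₂) (Δ : SimpComplex V) : Prop :=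
  ∃ (f₁ : V₁ ↪ V) (f₂ : V₂ ↪ V) (F₁ : Finset V₁) (F₂ : Finset V₂),
    F₁.card = t ∧ F₂.card = t ∧ F₁ ∈ Δ₁.faces ∧ F₂ ∈ Δ₂.faces ∧
    (∀ F ∈ Δ₁.faces, F₁ ⊆ F → F = F₁) ∧
    (∀ F ∈ Δ₂.faces, F₂ ⊆ F → F = F₂) ∧
    Set.range f₁ ∪ Set.range f₂ = Set.univ ∧
    Set.range f₁ ∩ Set.range f₂ = ↑(F₁.image ⇑f₁) ∧
    F₁.image ⇑f₁ = F₂.image ⇑f₂ ∧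
    Δ.faces = (Δ₁.faces.image (Finset.image ⇑f₁) ∪ Δ₂.faces.image (Finset.image ⇑f₂))
      \ {F₁.image ⇑f₁}


section PathProof
open SimpleGraph

/-- block start: largest s ≤ v with s-1 ∉ S (or s = 0) and [s,v) ⊆ S. -/
def pstart (S : Finset ℕ) : ℕ → ℕ
  | 0 => 0
  | (v+1) => if v ∈ S then pstart S v else v+1

lemma pstart_le (S : Finset ℕ) (v : ℕ) : pstart S v ≤ v := by
  induction v with
  | zero => simp [pstart]
  | succ v ih => simp only [pstart]; split <;> omega

lemma pstart_interval (S : Finset ℕ) (v : ℕ) (hv : v ∈ S) :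
    ∀ c, pstart S v ≤ c → c ≤ v → c ∈ S := by
  induction v with
  | zero => intro c h1 h2; have : c = 0 := by omega
            rwa [this]
  | succ v ih =>
      intro c h1 h2
      by_cases hmem : v ∈ S
      · simp only [pstart, if_pos hmem] at h1
        rcases Nat.lt_or_ge c (v+1) with h | h
        · exact ih hmem c h1 (by omega)
        · have : c = v + 1 := by omega
          rwa [this]
      · simp only [pstart, if_neg hmem] at h1
        have : c = v + 1 := by omega
        rwa [this]

lemma pstart_mem (S : Finset ℕ) (v : ℕ) (hv : v ∈ S) : pstart S v ∈ S :=
  pstart_interval S v hv _ le_rfl (pstart_le S v)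

lemma pstart_start (S : Finset ℕ) (v : ℕ) :
    pstart S v = 0 ∨ (pstart S v ≠ 0 ∧ pstart S v - 1 ∉ S) := by
  induction v with
  | zero => left; rfl
  | succ v ih =>
      by_cases hmem : v ∈ S
      · simpa only [pstart, if_pos hmem] using ih
      · right; simp only [pstart, if_neg hmem]; exact ⟨Nat.succ_ne_zero v, by simpa⟩

lemma pstart_succ_mem (S : Finset ℕ) (v : ℕ) (hv : v ∈ S) :
    pstart S (v+1) = pstart S v := by simp [pstart, hv]

lemma pstart_fix (S : Finset ℕ) (v : ℕ) (h : v = 0 ∨ v - 1 ∉ S) : pstart S v = v := by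
  cases v with
  | zero => rfl
  | succ v =>
      rcases h with h | h
      · omega
      · simp only [Nat.succ_sub_one] at h
        simp [pstart, h]

lemma pstart_idem (S : Finset ℕ) (v : ℕ) : pstart S (pstart S v) = pstart S v := by
  apply pstart_fix
  rcases pstart_start S v with h | h
  · left; exact h
  · right; exact h.2

variable {n : ℕ}

def NW (W : Finset (Fin (n+1))) : Finset ℕ := W.image Fin.val

lemma mem_NW {W : Finset (Fin (n+1))} (m : ℕ) (h : m < n+1) :
    m ∈ NW W ↔ (⟨m, h⟩ : Fin (n+1)) ∈ W := by
  simp only [NW, Finset.mem_image]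
  constructor
  · rintro ⟨x, hx, rfl⟩
    have : x = ⟨x.val, h⟩ := Fin.ext rfl
    rwa [← this]
  · intro h'; exact ⟨_, h', rfl⟩

abbrev HW (W : Finset (Fin (n+1))) : SimpleGraph ↥(W : Set (Fin (n+1))) :=
  (SimpleGraph.pathGraph (n+1)).induce (W : Set (Fin (n+1)))

lemma mem_NW_of {W : Finset (Fin (n+1))} (a : ↥(W : Set (Fin (n+1)))) : (a.1 : ℕ) ∈ NW W :=
  Finset.mem_image_of_mem _ a.2

lemma adj_pstart {W : Finset (Fin (n+1))} {a b : ↥(W : Set (Fin (n+1)))}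
    (h : (HW W).Adj a b) : pstart (NW W) (a.1 : ℕ) = pstart (NW W) (b.1 : ℕ) := by
  have h' : (a.1 : ℕ) + 1 = (b.1 : ℕ) ∨ (b.1 : ℕ) + 1 = (a.1 : ℕ) := by
    simpa [pathGraph_adj] using h
  rcases h' with h' | h'
  · rw [← h', pstart_succ_mem _ _ (mem_NW_of a)]
  · rw [← h', pstart_succ_mem _ _ (mem_NW_of b)]

lemma walk_pstart {W : Finset (Fin (n+1))} {a b : ↥(W : Set (Fin (n+1)))}
    (p : (HW W).Walk a b) : pstart (NW W) (a.1 : ℕ) = pstart (NW W) (b.1 : ℕ) := by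
  induction p with
  | nil => rfl
  | cons h _ ih => exact (adj_pstart h).trans ih

lemma reach_down {W : Finset (Fin (n+1))} :
    ∀ (d s : ℕ) (hs : s + d < n + 1)
      (h : ∀ c, s ≤ c → c ≤ s + d → c ∈ NW W),
      (HW W).Reachable
        ⟨⟨s + d, hs⟩, by rw [Finset.mem_coe, ← mem_NW _ hs]; exact h _ (by omega) le_rfl⟩
        ⟨⟨s, by omega⟩, by rw [Finset.mem_coe, ← mem_NW _ (by omega)]; exact h _ le_rfl (by omega)⟩ := by
  intro d
  induction d with
  | zero => intro s hs h; rfl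
  | succ d ih =>
      intro s hs h
      have h1 : (HW W).Adj
          ⟨⟨s + (d+1), hs⟩, by rw [Finset.mem_coe, ← mem_NW _ hs]; exact h _ (by omega) le_rfl⟩
          ⟨⟨s + d, by omega⟩, by rw [Finset.mem_coe, ← mem_NW _ (by omega)]; exact h _ (by omega) (by omega)⟩ := by
        simp only [comap_adj, Function.Embedding.coe_subtype, pathGraph_adj]
        right; rfl
      refine h1.reachable.trans ?_
      exact ih s (by omega) (fun c h1 h2 => h c h1 (by omega))

lemma reach_of_interval {W : Finset (Fin (n+1))} (a b : ↥(W : Set (Fin (n+1))))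
    (hab : (a.1 : ℕ) ≤ (b.1 : ℕ))
    (h : ∀ c, (a.1 : ℕ) ≤ c → c ≤ (b.1 : ℕ) → c ∈ NW W) : (HW W).Reachable b a := by
  have hd : (a.1 : ℕ) + ((b.1 : ℕ) - (a.1 : ℕ)) < n + 1 := by
    have := b.1.isLt; omega
  have hr := reach_down (W := W) ((b.1 : ℕ) - (a.1 : ℕ)) (a.1 : ℕ) hd
    (fun c h1 h2 => h c h1 (by omega))
  convert hr using 1
  exact Subtype.ext (Fin.ext (by simp; omega))

def Sst (W : Finset (Fin (n+1))) : Finset (Fin (n+1)) :=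
  W.filter (fun i => (i : ℕ) = 0 ∨ (i : ℕ) - 1 ∉ NW W)

noncomputable def Fc (W : Finset (Fin (n+1))) : (HW W).ConnectedComponent → ↥(Sst W) :=
  ConnectedComponent.lift
    (fun v => ⟨⟨pstart (NW W) (v.1 : ℕ), by have := v.1.isLt; have := pstart_le (NW W) (v.1 : ℕ); omega⟩, by
      rw [Sst, Finset.mem_filter]
      constructor
      · rw [← mem_NW _ _]; exact pstart_mem _ _ (mem_NW_of v)
      · exact (pstart_start (NW W) (v.1 : ℕ)).imp id And.right⟩)
    (fun v w p _ => Subtype.ext (Fin.ext (walk_pstart p)))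

lemma Fc_bij (W : Finset (Fin (n+1))) : Function.Bijective (Fc W) := by
  constructor
  · intro c₁ c₂
    refine ConnectedComponent.ind₂ (fun v w h => ?_) c₁ c₂
    have hps : pstart (NW W) (v.1 : ℕ) = pstart (NW W) (w.1 : ℕ) := by
      simpa [Fc, Subtype.ext_iff, Fin.ext_iff] using h
    set s := pstart (NW W) (v.1 : ℕ) with hs
    have hsv : s < n + 1 := by have := v.1.isLt; have := pstart_le (NW W) (v.1 : ℕ); omega
    have hsmem : s ∈ NW W := pstart_mem _ _ (mem_NW_of v)
    have hsW : (⟨s, hsv⟩ : Fin (n+1)) ∈ (W : Set (Fin (n+1))) := by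
      rw [Finset.mem_coe, ← mem_NW _ hsv]; exact hsmem
    set sv : ↥(W : Set (Fin (n+1))) := ⟨⟨s, hsv⟩, hsW⟩
    have r1 : (HW W).Reachable v sv :=
      reach_of_interval sv v (pstart_le _ _) (fun c h1 h2 => pstart_interval _ _ (mem_NW_of v) c h1 h2)
    have r2 : (HW W).Reachable w sv := by
      refine reach_of_interval sv w ?_ (fun c h1 h2 => ?_)
      · show s ≤ (w.1 : ℕ)
        rw [hps]; exact pstart_le _ _
      · refine pstart_interval _ _ (mem_NW_of w) c ?_ h2
        rwa [← hps]
    exact ConnectedComponent.sound (r1.trans r2.symm)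
  · intro i
    have hiW : i.1 ∈ W := (Finset.mem_filter.mp i.2).1
    have hiW' : i.1 ∈ (W : Set (Fin (n+1))) := hiW
    refine ⟨(HW W).connectedComponentMk ⟨i.1, hiW'⟩, ?_⟩
    apply Subtype.ext
    apply Fin.ext
    show pstart (NW W) (i.1 : ℕ) = (i.1 : ℕ)
    exact pstart_fix _ _ ((Finset.mem_filter.mp i.2).2)

lemma card_components (W : Finset (Fin (n+1))) :
    Nat.card (HW W).ConnectedComponent = (Sst W).card := by
  rw [Nat.card_congr (Equiv.ofBijective _ (Fc_bij W)), Nat.card_eq_finsetCard]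


lemma card_filter_pair {α : Type*} [Fintype α] [DecidableEq α] (a b : α) (hab : a ≠ b)
    (k : ℕ) (hk : 2 ≤ k) :
    ((powersetCard k (univ : Finset α)).filter (fun W => a ∈ W ∧ b ∈ W)).card
      = (Fintype.card α - 2).choose (k - 2) := by
  have hcard : ((univ.erase a).erase b).card = Fintype.card α - 2 := by
    rw [Finset.card_erase_of_mem (Finset.mem_erase.mpr ⟨hab.symm, Finset.mem_univ b⟩),
        Finset.card_erase_of_mem (Finset.mem_univ a), Finset.card_univ]
    omega
  rw [← hcard, ← Finset.card_powersetCard]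
  apply Finset.card_nbij' (fun W => (W.erase a).erase b) (fun U => insert a (insert b U))
  · intro W hW
    simp only [Finset.mem_coe] at hW ⊢
    rw [Finset.mem_filter, Finset.mem_powersetCard] at hW
    obtain ⟨⟨_, hWk⟩, haW, hbW⟩ := hW
    rw [Finset.mem_powersetCard]
    constructor
    · intro x hx
      rw [Finset.mem_erase] at hx ⊢
      exact ⟨hx.1, Finset.mem_erase.mpr ⟨(Finset.mem_erase.mp hx.2).1, Finset.mem_univ x⟩⟩
    · rw [Finset.card_erase_of_mem (Finset.mem_erase.mpr ⟨hab.symm, hbW⟩),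
          Finset.card_erase_of_mem haW, hWk]
      omega
  · intro U hU
    simp only [Finset.mem_coe] at hU ⊢
    rw [Finset.mem_powersetCard] at hU
    obtain ⟨hUsub, hUk⟩ := hU
    have haU : a ∉ insert b U := by
      rw [Finset.mem_insert]
      rintro (rfl | h)
      · exact hab rfl
      · exact (Finset.mem_erase.mp ((Finset.mem_erase.mp (hUsub h)).2)).1 rfl
    have hbU : b ∉ U := fun h => (Finset.mem_erase.mp (hUsub h)).1 rfl
    rw [Finset.mem_filter, Finset.mem_powersetCard]
    refine ⟨⟨Finset.subset_univ _, ?_⟩, Finset.mem_insert_self a _,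
      Finset.mem_insert_of_mem (Finset.mem_insert_self b _)⟩
    rw [Finset.card_insert_of_notMem haU, Finset.card_insert_of_notMem hbU, hUk]
    omega
  · intro W hW
    rw [Finset.mem_coe, Finset.mem_filter] at hW
    obtain ⟨_, haW, hbW⟩ := hW
    ext x
    simp only [Finset.mem_insert, Finset.mem_erase]
    constructor
    · rintro (rfl | rfl | h)
      · exact haW
      · exact hbW
      · exact h.2.2
    · intro hx
      by_cases h1 : x = a
      · left; exact h1
      by_cases h2 : x = b
      · right; left; exact h2
      · right; right; exact ⟨h2, h1, hx⟩
  · intro U hU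
    rw [Finset.mem_coe, Finset.mem_powersetCard] at hU
    obtain ⟨hUsub, _⟩ := hU
    have hbU : b ∉ U := fun h => (Finset.mem_erase.mp (hUsub h)).1 rfl
    have haU : a ∉ U := fun h => (Finset.mem_erase.mp ((Finset.mem_erase.mp (hUsub h)).2)).1 rfl
    ext x
    simp only [Finset.mem_erase, Finset.mem_insert]
    constructor
    · rintro ⟨hxb, hxa, (rfl | rfl | h)⟩
      · exact absurd rfl hxa
      · exact absurd rfl hxb
      · exact h
    · intro hx
      exact ⟨fun h => hbU (h ▸ hx), fun h => haU (h ▸ hx), Or.inr (Or.inr hx)⟩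

lemma choose_identity (n k : ℕ) (hk : 2 ≤ k) :
    ((k : ℤ) - 1) * ((n+1).choose k) - (n : ℤ) * ((n-1).choose (k-2))
      = ((k : ℤ) - 1) * (n.choose k) := by
  obtain ⟨j, rfl⟩ : ∃ j, k = j + 2 := ⟨k - 2, by omega⟩
  cases n with
  | zero =>
      have h1 : Nat.choose 1 (j+2) = 0 := Nat.choose_eq_zero_of_lt (by omega)
      have h2 : Nat.choose 0 (j+2) = 0 := Nat.choose_eq_zero_of_lt (by omega)
      simp [h1, h2]
  | succ m =>
      have h1 : (m+1) * m.choose j = (m+1).choose (j+1) * (j+1) := Nat.add_one_mul_choose_eq m j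
      have h2 : (m+2).choose (j+2) = (m+1).choose (j+1) + (m+1).choose (j+2) :=
        Nat.choose_succ_succ _ _
      have h1' := congrArg (Nat.cast : ℕ → ℤ) h1
      have h2' := congrArg (Nat.cast : ℕ → ℤ) h2
      push_cast at h1' h2' ⊢
      have hs : ((m:ℤ) + 1 + 1 - 1) = (m : ℤ) + 1 := by ring
      rw [h2']
      ring_nf
      ring_nf at h1'
      linarith

def Edg {n : ℕ} (W : Finset (Fin (n+1))) : Finset (Fin (n+1)) :=
  W.filter (fun i => (i : ℕ) ≠ 0 ∧ (i : ℕ) - 1 ∈ NW W)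

lemma Sst_card {n : ℕ} (W : Finset (Fin (n+1))) : (Sst W).card + (Edg W).card = W.card := by
  classical
  rw [Sst, Edg]
  rw [← Finset.card_filter_add_card_filter_not
    (p := fun i : Fin (n+1) => (i : ℕ) = 0 ∨ (i : ℕ) - 1 ∉ NW W) (s := W)]
  congr 1
  refine congrArg Finset.card (Finset.filter_congr ?_)
  intro i _
  constructor
  · intro h; push_neg; exact h
  · intro h; push_neg at h; exact h

def predF {n : ℕ} (i : Fin (n+1)) : Fin (n+1) :=
  ⟨(i : ℕ) - 1, lt_of_le_of_lt (Nat.sub_le _ _) i.isLt⟩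

lemma Edg_eq {n : ℕ} (W : Finset (Fin (n+1))) :
    Edg W = Finset.filter (fun i : Fin (n+1) => (i : ℕ) ≠ 0 ∧ i ∈ W ∧ predF i ∈ W)
      Finset.univ := by
  ext i
  have hlt : (i : ℕ) - 1 < n + 1 := lt_of_le_of_lt (Nat.sub_le _ _) i.isLt
  simp only [Edg, Finset.mem_filter, Finset.mem_univ, true_and, mem_NW _ hlt]
  have hpf : (⟨(i : ℕ) - 1, hlt⟩ : Fin (n+1)) = predF i := rfl
  rw [hpf]
  tauto

lemma sum_Edg {n k : ℕ} (hk : 2 ≤ k) :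
    ∑ W ∈ Finset.powersetCard k (Finset.univ : Finset (Fin (n+1))), (Edg W).card
      = n * ((n-1).choose (k-2)) := by
  classical
  calc ∑ W ∈ Finset.powersetCard k (Finset.univ : Finset (Fin (n+1))), (Edg W).card
      = ∑ W ∈ Finset.powersetCard k (Finset.univ : Finset (Fin (n+1))),
          ∑ i ∈ (Finset.univ : Finset (Fin (n+1))),
            if ((i : ℕ) ≠ 0 ∧ i ∈ W ∧ predF i ∈ W) then 1 else 0 := by
        refine Finset.sum_congr rfl fun W _ => ?_
        rw [Edg_eq, Finset.card_filter]
    _ = ∑ i ∈ (Finset.univ : Finset (Fin (n+1))),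
          ∑ W ∈ Finset.powersetCard k (Finset.univ : Finset (Fin (n+1))),
            if ((i : ℕ) ≠ 0 ∧ i ∈ W ∧ predF i ∈ W) then 1 else 0 := Finset.sum_comm
    _ = ∑ i ∈ (Finset.univ : Finset (Fin (n+1))),
          (if (i : ℕ) = 0 then 0 else (n-1).choose (k-2)) := by
        refine Finset.sum_congr rfl fun i _ => ?_
        by_cases hi : (i : ℕ) = 0
        · simp [hi]
        · rw [if_neg hi]
          have hne : i ≠ predF i := by
            intro h
            have := congrArg Fin.val h
            simp only [predF] at this
            omega
          have hcfp := card_filter_pair i (predF i) hne k hk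
          rw [Fintype.card_fin] at hcfp
          have h2 : n + 1 - 2 = n - 1 := by omega
          rw [h2] at hcfp
          rw [← hcfp, Finset.card_filter]
          refine Finset.sum_congr rfl fun W _ => ?_
          refine if_congr ?_ rfl rfl
          tauto
    _ = n * ((n-1).choose (k-2)) := by
        rw [Finset.sum_ite]
        rw [Finset.sum_const, Finset.sum_const]
        have hfil : Finset.filter (fun i : Fin (n+1) => ¬((i : ℕ) = 0)) Finset.univ
            = Finset.univ.erase (0 : Fin (n+1)) := by
          ext x
          simp only [Finset.mem_filter, Finset.mem_univ, true_and, Finset.mem_erase, and_true, ne_eq, Fin.ext_iff, Fin.val_zero]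
        rw [hfil, Finset.card_erase_of_mem (Finset.mem_univ _), Finset.card_univ,
          Fintype.card_fin]
        simp [mul_comm]

/-- for the path graph with `n+1` vertices, `b_k = (k-1)·C(n,k)` for `k ≥ 1`. -/
theorem bk_pathGraph (n k : ℕ) (hk : 1 ≤ k) :
    graphB k (SimpleGraph.pathGraph (n + 1)) = ((k : ℤ) - 1) * (n.choose k) := by
  classical
  rw [graphB]
  have hstep : ∀ W ∈ Finset.powersetCard k (Finset.univ : Finset (Fin (n+1))),
      ((Nat.card ((SimpleGraph.pathGraph (n+1)).induce (W : Set (Fin (n+1)))).ConnectedComponent : ℤ) - 1)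
        = ((k : ℤ) - 1) - ((Edg W).card : ℤ) := by
    intro W hW
    rw [Finset.mem_powersetCard] at hW
    have h1 := card_components W
    have h2 := Sst_card W
    rw [hW.2] at h2
    rw [h1]
    push_cast
    omega
  rw [Finset.sum_congr rfl hstep, Finset.sum_sub_distrib, Finset.sum_const,
    Finset.card_powersetCard, Finset.card_univ, Fintype.card_fin]
  rcases eq_or_lt_of_le hk with heq | hk2
  · have hE : ∀ W ∈ Finset.powersetCard k (Finset.univ : Finset (Fin (n+1))),
        ((Edg W).card : ℤ) = 0 := by
      intro W hW
      rw [Finset.mem_powersetCard, ← heq] at hW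
      obtain ⟨a, rfl⟩ := Finset.card_eq_one.mp hW.2
      suffices h : Edg {a} = ∅ by simp [h]
      rw [Edg, Finset.filter_eq_empty_iff]
      intro i hi
      rw [Finset.mem_singleton] at hi
      subst hi
      rintro ⟨h0, hmem⟩
      simp only [NW, Finset.image_singleton, Finset.mem_singleton] at hmem
      omega
    rw [Finset.sum_congr rfl hE, Finset.sum_const_zero, ← heq]
    simp
  · have hE := sum_Edg (n := n) (k := k) hk2
    rw [← Nat.cast_sum, hE]
    have hid := choose_identity n k hk2
    push_cast
    rw [nsmul_eq_mul]
    push_cast at hid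
    linarith

end PathProof
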